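/- Let L be an origin-symmetric star body in ℝ² and let k be a positive even integer. Suppose there are homogeneous polynomials P and Q in two variables, of degrees k and k+2 respectively, such that ‖(u,v)‖_L^k = P(u,v) and ‖(u,v)‖_L^{k+2} = Q(u,v) for all (u,v) ∈ ℝ². Then L is an ellipse; that is, ‖·‖_L² is a positive definite quadratic form on ℝ². -/

import Mathlib

open MvPolynomial

attribute [local instance] MvPolynomial.gradedAlgebra

/-- The quadratic form `a u² + b uv + c v²` on `ℝ²`. -/
noncomputable def quadABC (a b c : ℝ) : QuadraticForm ℝ (EuclideanSpace ℝ (Fin 2)) where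
  toFun x := a * x 0 ^ 2 + b * (x 0 * x 1) + c * x 1 ^ 2
  toFun_smul t x := by
    simp only [PiLp.smul_apply, smul_eq_mul]
    ring
  exists_companion' := by
    refine ⟨LinearMap.mk₂ ℝ
      (fun x y => 2*a*(x 0 * y 0) + b*(x 0 * y 1 + x 1 * y 0) + 2*c*(x 1 * y 1))
      ?_ ?_ ?_ ?_, ?_⟩
    · intro x x' y; simp only [PiLp.add_apply]; ring
    · intro t x y; simp only [PiLp.smul_apply, smul_eq_mul]; ring
    · intro x y y'; simp only [PiLp.add_apply]; ring
    · intro t x y; simp only [PiLp.smul_apply, smul_eq_mul]; ring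
    · intro x y
      simp only [LinearMap.mk₂_apply, PiLp.add_apply]
      ring

lemma quadABC_apply (a b c : ℝ) (x : EuclideanSpace ℝ (Fin 2)) :
    quadABC a b c x = a * x 0 ^ 2 + b * (x 0 * x 1) + c * x 1 ^ 2 := rfl

/-- Evaluation of a homogeneous polynomial of degree 2 in two variables. -/
lemma homog2_eval (B : MvPolynomial (Fin 2) ℝ) (h : B.IsHomogeneous 2) (x : Fin 2 → ℝ) :
    MvPolynomial.eval x B =
      MvPolynomial.coeff (Finsupp.single 0 2) B * x 0 ^ 2
      + MvPolynomial.coeff (Finsupp.single 0 1 + Finsupp.single 1 1) B * (x 0 * x 1)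
      + MvPolynomial.coeff (Finsupp.single 1 2) B * x 1 ^ 2 := by
  classical
  set m1 : Fin 2 →₀ ℕ := Finsupp.single 0 2 with hm1
  set m2 : Fin 2 →₀ ℕ := Finsupp.single 0 1 + Finsupp.single 1 1 with hm2
  set m3 : Fin 2 →₀ ℕ := Finsupp.single 1 2 with hm3
  have hm1v : m1 0 = 2 ∧ m1 1 = 0 := by constructor <;> simp [hm1, Finsupp.single_apply]
  have hm2v : m2 0 = 1 ∧ m2 1 = 1 := by constructor <;> simp [hm2, Finsupp.single_apply]
  have hm3v : m3 0 = 0 ∧ m3 1 = 2 := by constructor <;> simp [hm3, Finsupp.single_apply]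
  have h12 : m1 ≠ m2 := by intro hE; have := congrFun (congrArg DFunLike.coe hE) 0; omega
  have h13 : m1 ≠ m3 := by intro hE; have := congrFun (congrArg DFunLike.coe hE) 0; omega
  have h23 : m2 ≠ m3 := by intro hE; have := congrFun (congrArg DFunLike.coe hE) 0; omega
  have hdeg : ∀ d ∈ B.support, d 0 + d 1 = 2 := by
    intro d hd
    have h2 := h (mem_support_iff.mp hd)
    have : (Finsupp.weight (1 : Fin 2 → ℕ)) d = d 0 + d 1 := by
      rw [Finsupp.weight_apply, Finsupp.sum_fintype]
      · simp [Fin.sum_univ_two]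
      · intro i; simp
    omega
  have hsub : B.support ⊆ {m1, m2, m3} := by
    intro d hd
    have hd2 := hdeg d hd
    simp only [Finset.mem_insert, Finset.mem_singleton]
    have hext : ∀ (m : Fin 2 →₀ ℕ), d 0 = m 0 → d 1 = m 1 → d = m := by
      intro m h0 h1; ext i; fin_cases i <;> assumption
    have hb : d 0 ≤ 2 := by omega
    interval_cases hh : d 0
    · right; right; exact hext m3 (by omega) (by omega)
    · right; left; exact hext m2 (by omega) (by omega)
    · left; exact hext m1 (by omega) (by omega)
  rw [MvPolynomial.eval_eq']
  rw [Finset.sum_subset hsub (by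
    intro d _ hd
    rw [MvPolynomial.notMem_support_iff.mp hd]
    ring)]
  rw [Finset.sum_insert (by simp [h12, h13]), Finset.sum_insert (by simp [h23]),
    Finset.sum_singleton]
  simp only [Fin.prod_univ_two, hm1v.1, hm1v.2, hm2v.1, hm2v.2, hm3v.1, hm3v.2]
  ring

/-- Let `L` be an origin-symmetric star body in `ℝ²` and `k` a positive even integer.
If there are homogeneous polynomials `P`, `Q` in two variables of degrees `k` and `k + 2`
with `‖x‖_L ^ k = P(x)` and `‖x‖_L ^ (k+2) = Q(x)` for all `x ∈ ℝ²`, then `L` is an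
ellipse: `‖·‖_L²` is a positive definite quadratic form on `ℝ²`. -/
theorem planar_star_body_with_two_polynomial_powers_is_ellipse
    (L : Set (EuclideanSpace ℝ (Fin 2)))
    (hcomp : IsCompact L) (hstar : StarConvex ℝ 0 L)
    (hgauge_pos : ∀ x : EuclideanSpace ℝ (Fin 2), x ≠ 0 → 0 < gauge L x)
    (hgauge_cont : ContinuousOn (gauge L) {(0 : EuclideanSpace ℝ (Fin 2))}ᶜ)
    (hsym : L = -L)
    (k : ℕ) (hk : 0 < k) (hke : Even k)
    (P Q : MvPolynomial (Fin 2) ℝ)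
    (hP : P.IsHomogeneous k) (hQ : Q.IsHomogeneous (k + 2))
    (hPL : ∀ x : EuclideanSpace ℝ (Fin 2),
      gauge L x ^ k = MvPolynomial.eval (fun i => x i) P)
    (hQL : ∀ x : EuclideanSpace ℝ (Fin 2),
      gauge L x ^ (k + 2) = MvPolynomial.eval (fun i => x i) Q) :
    ∃ B : QuadraticForm ℝ (EuclideanSpace ℝ (Fin 2)), B.PosDef ∧
      ∀ x : EuclideanSpace ℝ (Fin 2), gauge L x ^ 2 = B x := by
  classical
  -- `P` does not vanish identically
  have hPne : P ≠ 0 := by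
    intro h0
    have h1 := hPL (EuclideanSpace.single 0 1)
    have hne : (EuclideanSpace.single (0 : Fin 2) (1:ℝ)) ≠ 0 := by
      intro hE
      have := congrArg (fun v => v 0) hE
      simp [EuclideanSpace.single_apply] at this
    rw [h0] at h1
    simp only [map_zero] at h1
    exact (pow_pos (hgauge_pos _ hne) k).ne' h1
  -- the key polynomial identity `Q ^ k = P ^ (k + 2)`
  have hkey : Q ^ k = P ^ (k + 2) := by
    apply MvPolynomial.funext
    intro x
    have h1 := hPL ((WithLp.equiv 2 (Fin 2 → ℝ)).symm x)
    have h2 := hQL ((WithLp.equiv 2 (Fin 2 → ℝ)).symm x)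
    have hx : (fun i => ((WithLp.equiv 2 (Fin 2 → ℝ)).symm x) i) = x := rfl
    rw [hx] at h1 h2
    simp only [map_pow]
    rw [← h1, ← h2, ← pow_mul, ← pow_mul, mul_comm]
  -- hence `P ∣ Q` since polynomial rings are integrally closed domains
  have hPdvdQ : P ∣ Q := by
    have h1 : P ^ k ∣ Q ^ k := hkey ▸ pow_dvd_pow P (by omega)
    exact (IsIntegrallyClosed.pow_dvd_pow_iff hk.ne').mp h1
  obtain ⟨B0, hB0⟩ := hPdvdQ
  -- the quotient `B0` is homogeneous of degree 2
  have hB0hom : B0.IsHomogeneous 2 := by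
    have hmem : P ∈ homogeneousSubmodule (Fin 2) ℝ k := (mem_homogeneousSubmodule _ _).mpr hP
    have key := DirectSum.coe_decompose_mul_add_of_left_mem
      (homogeneousSubmodule (Fin 2) ℝ) (b := B0) (j := 2) hmem
    have hd1 : ((DirectSum.decompose (homogeneousSubmodule (Fin 2) ℝ) (P * B0) (k + 2) :
        homogeneousSubmodule (Fin 2) ℝ (k+2)) : MvPolynomial (Fin 2) ℝ)
        = homogeneousComponent (k+2) (P * B0) :=
      MvPolynomial.decomposition.decompose'_apply _ _
    have hd2 : ((DirectSum.decompose (homogeneousSubmodule (Fin 2) ℝ) B0 2 :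
        homogeneousSubmodule (Fin 2) ℝ 2) : MvPolynomial (Fin 2) ℝ)
        = homogeneousComponent 2 B0 :=
      MvPolynomial.decomposition.decompose'_apply _ _
    rw [hd1, hd2] at key
    rw [← hB0] at key
    rw [homogeneousComponent_of_mem ((mem_homogeneousSubmodule _ _).mpr hQ), if_pos rfl,
      hB0] at key
    have : B0 = homogeneousComponent 2 B0 := mul_left_cancel₀ hPne key
    exact this ▸ homogeneousComponent_isHomogeneous 2 B0
  -- pointwise, `gauge L x ^ 2 = B0 (x)`
  have heval : ∀ x : EuclideanSpace ℝ (Fin 2),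
      gauge L x ^ 2 = MvPolynomial.eval (fun i => x i) B0 := by
    intro x
    by_cases hx : x = 0
    · subst hx
      rw [gauge_zero, homog2_eval B0 hB0hom]
      norm_num
    · have hg : 0 < gauge L x := hgauge_pos x hx
      have h2 := hQL x
      rw [hB0, map_mul, ← hPL, pow_add] at h2
      exact mul_left_cancel₀ (pow_pos hg k).ne' h2
  -- assemble the quadratic form
  set a := MvPolynomial.coeff (Finsupp.single 0 2) B0 with ha
  set b := MvPolynomial.coeff (Finsupp.single 0 1 + Finsupp.single 1 1) B0 with hb
  set c := MvPolynomial.coeff (Finsupp.single 1 2) B0 with hc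
  have hform : ∀ x : EuclideanSpace ℝ (Fin 2), gauge L x ^ 2 = quadABC a b c x := by
    intro x
    rw [heval x, homog2_eval B0 hB0hom, quadABC_apply]
  refine ⟨quadABC a b c, ?_, hform⟩
  intro x hx
  rw [← hform x]
  exact pow_pos (hgauge_pos x hx) 2
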